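/- Let Λ be a finite dimensional hereditary algebra over an infinite field K. Suppose σ is a nonzero semi-invariant on the presentation space Hom_Λ(P(γ_1), P(γ_0)) with determinantal weight β ∈ Z^n. If for each index i either the i-th coordinate of γ_0 or of γ_1 is nonzero, then β_i ≥ 0 for all i. -/

import Mathlib

/-- A function on a finite dimensional vector space is a polynomial (regular) function if
it is given by a multivariate polynomial in the coordinates with respect to a basis. -/
def IsPolynomialFun (K V : Type) [Field K] [AddCommGroup V] [Module K V]
    [FiniteDimensional K V] (σ : V → K) : Prop :=
  ∃ p : MvPolynomial (Fin (Module.finrank K V)) K,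
    ∀ v : V, σ v = MvPolynomial.eval (fun j => (Module.finBasis K V).repr v j) p

/-- The determinantal character: the `K`-determinant of the action of a square matrix over
the division algebra `F` on `F^m` (by right multiplication), viewed as a `K`-linear map. -/
noncomputable def detChar (K : Type) [Field K] (F : Type) [DivisionRing F] [Algebra K F]
    (m : ℕ) (g : Matrix (Fin m) (Fin m) F) : K :=
  LinearMap.det (LinearMap.restrictScalars K (Matrix.vecMulLinear g))

open Polynomial in
theorem eval_affine (K : Type) [Field K] (r : ℕ) (p : MvPolynomial (Fin r) K) (u w : Fin r → K) (t : K) :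
    Polynomial.eval t (MvPolynomial.aeval (fun j => C (u j) * X + C (w j)) p)
      = MvPolynomial.eval (fun j => t * u j + w j) p := by
  have h := congrFun (congrArg DFunLike.coe (MvPolynomial.comp_aeval (φ := Polynomial.aeval t)
    (f := fun j => C (u j) * X + C (w j)) (R := K))) p
  simp only [AlgHom.comp_apply] at h
  rw [← Polynomial.coe_aeval_eq_eval, h]
  simp only [map_add, map_mul, Polynomial.aeval_C, Polynomial.aeval_X, Algebra.algebraMap_self,
    RingHom.id_apply]
  rw [show (MvPolynomial.aeval fun i => u i * t + w i : MvPolynomial (Fin r) K →ₐ[K] K) p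
      = MvPolynomial.eval (fun i => u i * t + w i) p from
    congrFun (congrArg DFunLike.coe (MvPolynomial.coe_aeval_eq_eval _)) p]
  simp [mul_comm]

theorem aux_nonneg {K V : Type} [Field K] [Infinite K] [AddCommGroup V] [Module K V]
    [FiniteDimensional K V] (σ : V → K) (hpoly : IsPolynomialFun K V σ)
    (u w : V) (c : K) (hc : c ≠ 0) (N : ℕ) (hN : 0 < N) (b : ℤ)
    (h : ∀ t : K, t ≠ 0 → σ (t • u + w) = c * (t ^ N) ^ b) : 0 ≤ b := by
  by_contra hb
  push_neg at hb
  set m := (-b).toNat with hm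
  have hbm : b = -(m : ℤ) := by omega
  have hm0 : m ≠ 0 := by omega
  obtain ⟨p, hp⟩ := hpoly
  set B := Module.finBasis K V
  set Q : Polynomial K := MvPolynomial.aeval
    (fun j => Polynomial.C (B.repr u j) * Polynomial.X + Polynomial.C (B.repr w j)) p with hQdef
  have hQ : ∀ t : K, Q.eval t = σ (t • u + w) := by
    intro t
    rw [hQdef, eval_affine, hp]
    have : (fun j => t * B.repr u j + B.repr w j) = fun j => B.repr (t • u + w) j := by
      funext j; simp
    rw [this]
  set R : Polynomial K := Q * Polynomial.X ^ (N * m) - Polynomial.C c with hRdef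
  have hR : R = 0 := by
    apply Polynomial.eq_zero_of_infinite_isRoot
    apply Set.Infinite.mono (s := {x : K | x ≠ 0})
    · intro t ht
      have ht' : (t : K) ≠ 0 := ht
      have hst := h t ht'
      rw [← hQ t] at hst
      have hz : (t ^ N) ^ b = (t ^ (N * m))⁻¹ := by
        rw [hbm, zpow_neg, zpow_natCast, ← pow_mul]
      simp only [Set.mem_setOf_eq, Polynomial.IsRoot, hRdef, Polynomial.eval_sub,
        Polynomial.eval_mul, Polynomial.eval_pow, Polynomial.eval_X, Polynomial.eval_C]
      rw [hst, hz]
      field_simp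
      ring
    · have h1 : ({(0 : K)}ᶜ : Set K).Infinite := (Set.finite_singleton 0).infinite_compl
      exact h1
  have h0 := congrArg (Polynomial.eval 0) hR
  have hNm : N * m ≠ 0 := Nat.mul_ne_zero hN.ne' hm0
  simp only [hRdef, Polynomial.eval_sub, Polynomial.eval_mul, Polynomial.eval_pow,
    Polynomial.eval_X, Polynomial.eval_C, Polynomial.eval_zero, zero_pow hNm, mul_zero, zero_sub,
    neg_eq_zero] at h0
  exact hc h0

theorem detChar_one (K : Type) [Field K] (F : Type) [DivisionRing F] [Algebra K F] (m : ℕ) :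
    detChar K F m 1 = 1 := by
  unfold detChar
  have : LinearMap.restrictScalars K (Matrix.vecMulLinear (1 : Matrix (Fin m) (Fin m) F))
      = LinearMap.id := by
    ext v
    simp [Matrix.vecMulLinear_apply, Matrix.vecMul_one]
  rw [this, LinearMap.det_id]

theorem detChar_smul_one (K : Type) [Field K] (F : Type) [DivisionRing F] [Algebra K F]
    [FiniteDimensional K F] (m : ℕ) (t : K) :
    detChar K F m (t • 1) = t ^ Module.finrank K (Fin m → F) := by
  unfold detChar
  have : LinearMap.restrictScalars K (Matrix.vecMulLinear (t • (1 : Matrix (Fin m) (Fin m) F)))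
      = t • LinearMap.id := by
    refine LinearMap.ext fun v => ?_
    ext i
    simp [Matrix.vecMulLinear_apply, Matrix.vecMul, dotProduct, Matrix.one_apply,
      mul_smul_comm, Finset.sum_ite_eq]
  rw [this, LinearMap.det_smul, LinearMap.det_id, mul_one]

theorem side_nonneg
    (K : Type) [Field K] [Infinite K] (n : ℕ)
    (F : Fin n → Type) [∀ i, DivisionRing (F i)] [∀ i, Algebra K (F i)]
    [∀ i, FiniteDimensional K (F i)]
    (γ : Fin n → ℕ) (β : Fin n → ℤ)
    (V : Type) [AddCommGroup V] [Module K V] [FiniteDimensional K V]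
    (ρ : (∀ i, Matrix (Fin (γ i)) (Fin (γ i)) (F i)) →ₐ[K] Module.End K V)
    (σ : V → K) (hpoly : IsPolynomialFun K V σ) (v₀ : V) (hv : σ v₀ ≠ 0)
    (hsig : ∀ g : ∀ j, Matrix (Fin (γ j)) (Fin (γ j)) (F j), (∀ j, IsUnit (g j)) →
      σ (ρ g v₀) = σ v₀ * ∏ j, detChar K (F j) (γ j) (g j) ^ β j)
    (i : Fin n) (hγ : γ i ≠ 0) : 0 ≤ β i := by
  classical
  haveI : Nonempty (Fin (γ i)) := ⟨⟨0, Nat.pos_of_ne_zero hγ⟩⟩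
  set N := Module.finrank K (Fin (γ i) → F i) with hNdef
  have hN : 0 < N := Module.finrank_pos
  set e : ∀ j, Matrix (Fin (γ j)) (Fin (γ j)) (F j) := Function.update 0 i 1 with hedef
  set u : V := ρ e v₀ with hudef
  set w : V := v₀ - ρ e v₀ with hwdef
  refine aux_nonneg σ hpoly u w (σ v₀) hv N hN (β i) fun t ht => ?_
  set g : ∀ j, Matrix (Fin (γ j)) (Fin (γ j)) (F j) := Function.update 1 i (t • 1) with hgdef
  have hge : g = t • e + (1 - e) := by
    funext j
    by_cases hj : j = i
    · subst hj; simp [hgdef, hedef]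
    · simp [hgdef, hedef, Function.update_of_ne hj]
  have happ : ρ g v₀ = t • u + w := by
    rw [hge, map_add, map_sub, map_one, map_smul, LinearMap.add_apply, LinearMap.smul_apply,
      LinearMap.sub_apply, Module.End.one_apply]
  have hunit : ∀ j, IsUnit (g j) := by
    intro j
    by_cases hj : j = i
    · subst hj
      simp only [hgdef, Function.update_self]
      exact ⟨⟨t • 1, t⁻¹ • 1,
        by rw [smul_mul_assoc, one_mul, smul_smul, mul_inv_cancel₀ ht, one_smul],
        by rw [smul_mul_assoc, one_mul, smul_smul, inv_mul_cancel₀ ht, one_smul]⟩, rfl⟩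
    · simp only [hgdef, Function.update_of_ne hj, Pi.one_apply]
      exact isUnit_one
  have hprod : ∏ j, detChar K (F j) (γ j) (g j) ^ β j = (t ^ N) ^ β i := by
    rw [Finset.prod_eq_single i]
    · simp only [hgdef, Function.update_self]
      rw [detChar_smul_one]
    · intro j _ hj
      simp only [hgdef, Function.update_of_ne hj, Pi.one_apply, detChar_one, one_zpow]
    · intro h; exact absurd (Finset.mem_univ i) h
  rw [← happ, hsig g hunit, hprod]

/-- Let `Λ` be a finite dimensional hereditary algebra over an infinite field
`K`.  A presentation space `Hom_Λ(P(γ₁), P(γ₀))` is a finite dimensional `K`-vector space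
`V` with two commuting actions of the algebras `End_Λ(P(γ_s)) ≅ ∏ᵢ M_{γ_s(i)}(F i)`
(`F i = End_Λ(P_i)` the division algebras of the vertices).  Suppose `σ` is a nonzero
polynomial semi-invariant on `V` of determinantal weight `β ∈ ℤⁿ`, i.e.
`σ(g₀ · f · g₁) = σ(f) ∏ᵢ χᵢ(g₀)^{βᵢ} χᵢ(g₁)^{βᵢ}` for all automorphisms `g₀, g₁`, where
`χᵢ` is the `K`-determinant character on the `GL(·, F i)`-block.  If for each index `i`
either the `i`-th coordinate of `γ₀` or of `γ₁` is nonzero, then `βᵢ ≥ 0` for all `i`. -/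
theorem det_weight_nonneg
    (K : Type) [Field K] [Infinite K] (n : ℕ)
    (F : Fin n → Type) [∀ i, DivisionRing (F i)] [∀ i, Algebra K (F i)]
    [∀ i, FiniteDimensional K (F i)]
    (γ₀ γ₁ : Fin n → ℕ) (β : Fin n → ℤ)
    (V : Type) [AddCommGroup V] [Module K V] [FiniteDimensional K V]
    (ρ₀ : (∀ i, Matrix (Fin (γ₀ i)) (Fin (γ₀ i)) (F i)) →ₐ[K] Module.End K V)
    (ρ₁ : (∀ i, Matrix (Fin (γ₁ i)) (Fin (γ₁ i)) (F i)) →ₐ[K] Module.End K V)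
    (hcomm : ∀ a b, Commute (ρ₀ a) (ρ₁ b))
    (σ : V → K) (hpoly : IsPolynomialFun K V σ) (hσ : σ ≠ 0)
    (hsemi : ∀ (g₀ : ∀ i, Matrix (Fin (γ₀ i)) (Fin (γ₀ i)) (F i)), (∀ i, IsUnit (g₀ i)) →
      ∀ (g₁ : ∀ i, Matrix (Fin (γ₁ i)) (Fin (γ₁ i)) (F i)), (∀ i, IsUnit (g₁ i)) →
      ∀ v : V, σ (ρ₀ g₀ (ρ₁ g₁ v))
        = σ v * (∏ i, detChar K (F i) (γ₀ i) (g₀ i) ^ β i)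
            * ∏ i, detChar K (F i) (γ₁ i) (g₁ i) ^ β i)
    (hne : ∀ i, γ₀ i ≠ 0 ∨ γ₁ i ≠ 0) :
    ∀ i, 0 ≤ β i := by
  intro i
  obtain ⟨v₀, hv⟩ := Function.ne_iff.mp hσ
  rcases hne i with h0 | h1
  · refine side_nonneg K n F γ₀ β V ρ₀ σ hpoly v₀ hv ?_ i h0
    intro g hg
    have h := hsemi g hg 1 (fun j => isUnit_one) v₀
    rw [map_one] at h
    simp only [Module.End.one_apply] at h
    have hone : (∏ j, detChar K (F j) (γ₁ j) ((1 : ∀ j, Matrix (Fin (γ₁ j)) (Fin (γ₁ j)) (F j)) j) ^ β j) = 1 :=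
      Finset.prod_eq_one fun j _ => by rw [Pi.one_apply, detChar_one, one_zpow]
    rw [h, hone, mul_one]
  · refine side_nonneg K n F γ₁ β V ρ₁ σ hpoly v₀ hv ?_ i h1
    intro g hg
    have h := hsemi 1 (fun j => isUnit_one) g hg v₀
    rw [map_one] at h
    simp only [Module.End.one_apply] at h
    have hone : (∏ j, detChar K (F j) (γ₀ j) ((1 : ∀ j, Matrix (Fin (γ₀ j)) (Fin (γ₀ j)) (F j)) j) ^ β j) = 1 :=
      Finset.prod_eq_one fun j _ => by rw [Pi.one_apply, detChar_one, one_zpow]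
    rw [h, hone, mul_one]
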